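/- arXiv:2604.02067 — 4 statements merged into one kernel-verified Lean document; each statement's English description precedes it below -/
import Mathlib

section
/- Let M be a nonnegative integer. Then the sum over all monic polynomials r ∈ 𝔽_q[t] with deg(r) ≤ M of φ(r)/q^{2·deg(r)} equals 1 + M(q−1)/q. -/
open Polynomial

/-- Euler's totient function on `𝔽_q[t]`: the number of units of `𝔽_q[t]/(r)`. -/
noncomputable def polyPhi {Fq : Type} [Field Fq] (r : Polynomial Fq) : ℕ :=
  Nat.card (Polynomial Fq ⧸ Ideal.span {r})ˣ

namespace PhiAux
variable {Fq : Type} [Field Fq] [Fintype Fq]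

/-- polynomials of degree < n -/
def degLT (Fq : Type) [Field Fq] (n : ℕ) : Set (Polynomial Fq) := {p | p.degree < (n : ℕ)}

noncomputable def degLTEquiv (n : ℕ) : degLT Fq n ≃ (Fin n → Fq) :=
  (Equiv.subtypeEquivRight (fun p => (Polynomial.mem_degreeLT (n := n)).symm)).trans
    (Polynomial.degreeLTEquiv Fq n).toEquiv

lemma degLT_finite (n : ℕ) : (degLT Fq n).Finite :=
  Set.finite_coe_iff.mp ((degLTEquiv n).finite_iff.mpr inferInstance)

lemma card_degLT (n : ℕ) : Nat.card (degLT Fq n) = Fintype.card Fq ^ n := by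
  rw [Nat.card_congr (degLTEquiv n), Nat.card_eq_fintype_card, Fintype.card_fun,
    Fintype.card_fin]

/-- monic polynomials of natDegree exactly n -/
def MD (Fq : Type) [Field Fq] (n : ℕ) : Set (Polynomial Fq) :=
  {r | r.Monic ∧ r.natDegree = n}

noncomputable def MDEquiv (n : ℕ) : degLT Fq n ≃ MD Fq n where
  toFun p := ⟨X ^ n + p.val, by
    have hd : p.val.degree < (X ^ n : Fq[X]).degree := by
      rw [degree_X_pow]; exact p.prop
    have hm : (X ^ n + p.val).Monic := (monic_X_pow n).add_of_left hd
    refine ⟨hm, ?_⟩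
    have := degree_add_eq_left_of_degree_lt hd
    rw [degree_X_pow] at this
    exact natDegree_eq_of_degree_eq_some this⟩
  invFun r := ⟨r.val - X ^ n, by
    have hr0 : r.val ≠ 0 := r.prop.1.ne_zero
    have hdeg : r.val.degree = ((X : Fq[X]) ^ n).degree := by
      rw [degree_X_pow, degree_eq_natDegree hr0, r.prop.2]
    have := degree_sub_lt hdeg hr0 (by
      rw [r.prop.1.leadingCoeff, (monic_X_pow n (R := Fq)).leadingCoeff])
    rw [degree_eq_natDegree hr0, r.prop.2] at this
    exact this⟩
  left_inv p := by ext1; simp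
  right_inv r := by ext1; simp

lemma MD_finite (n : ℕ) : (MD Fq n).Finite :=
  Set.finite_coe_iff.mp ((MDEquiv n).symm.finite_iff.mpr
    (Set.finite_coe_iff.mpr (degLT_finite n)))

lemma card_MD (n : ℕ) : Nat.card (MD Fq n) = Fintype.card Fq ^ n := by
  rw [← Nat.card_congr (MDEquiv (Fq := Fq) n), card_degLT]


end PhiAux


namespace PhiAux
variable {Fq : Type} [Field Fq]

def Cop (r : Polynomial Fq) : Set (Polynomial Fq) :=
  {a | a.degree < r.degree ∧ IsCoprime a r}

lemma isUnit_mk_iff {r a : Polynomial Fq} :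
    IsUnit (Ideal.Quotient.mk (Ideal.span {r}) a) ↔ IsCoprime a r := by
  constructor
  · rintro ⟨u, hu⟩
    obtain ⟨b, hb⟩ := Ideal.Quotient.mk_surjective (↑u⁻¹ : Polynomial Fq ⧸ Ideal.span {r})
    have h1 : Ideal.Quotient.mk (Ideal.span {r}) (a * b) = Ideal.Quotient.mk _ 1 := by
      rw [map_mul, ← hu, hb, map_one, Units.mul_inv]
    obtain ⟨c, hc⟩ := Ideal.mem_span_singleton'.mp (Ideal.Quotient.eq.mp h1)
    exact ⟨b, -c, by linear_combination -hc⟩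
  · rintro ⟨u, v, huv⟩
    refine IsUnit.of_mul_eq_one (Ideal.Quotient.mk _ u) ?_
    rw [← map_mul, show (1 : Polynomial Fq ⧸ Ideal.span {r}) = Ideal.Quotient.mk _ 1 from rfl,
      Ideal.Quotient.eq]
    exact Ideal.mem_span_singleton'.mpr ⟨-v, by linear_combination -huv⟩

lemma mk_bijective {r : Polynomial Fq} (hr : r.Monic) :
    Function.Bijective (fun a : {a : Polynomial Fq // a.degree < r.degree} =>
      Ideal.Quotient.mk (Ideal.span {r}) a.val) := by
  constructor
  · rintro ⟨a, ha⟩ ⟨b, hb⟩ h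
    have hdvd : r ∣ a - b := Ideal.mem_span_singleton.mp (Ideal.Quotient.eq.mp h)
    have hdeg : (a - b).degree < r.degree := lt_of_le_of_lt (degree_sub_le a b) (max_lt ha hb)
    exact Subtype.ext (sub_eq_zero.mp (Polynomial.eq_zero_of_dvd_of_degree_lt hdvd hdeg))
  · intro x
    obtain ⟨p, hp⟩ := Ideal.Quotient.mk_surjective x
    refine ⟨⟨p %ₘ r, degree_modByMonic_lt p hr⟩, ?_⟩
    rw [← hp]
    refine Ideal.Quotient.eq.mpr (Ideal.mem_span_singleton'.mpr ⟨-(p /ₘ r), ?_⟩)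
    have := modByMonic_add_div p r
    linear_combination -this

end PhiAux

namespace PhiAux
variable {Fq : Type} [Field Fq]

lemma polyPhi_eq_card_Cop {r : Polynomial Fq} (hr : r.Monic) :
    polyPhi r = Nat.card (Cop r) := by
  symm
  refine Nat.card_eq_of_bijective
    (fun a => (isUnit_mk_iff.mpr a.prop.2).unit) ⟨?_, ?_⟩
  · rintro a b h
    have h2 : Ideal.Quotient.mk (Ideal.span {r}) a.val =
        Ideal.Quotient.mk (Ideal.span {r}) b.val := by
      have := congrArg Units.val h
      simpa [IsUnit.unit_spec] using this
    have := (mk_bijective hr).1 (a₁ := ⟨a.val, a.prop.1⟩) (a₂ := ⟨b.val, b.prop.1⟩) h2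
    have h3 : (⟨a.val, a.prop.1⟩ : {a : Polynomial Fq // a.degree < r.degree}) = ⟨b.val, b.prop.1⟩ := this
    have h4 : a.val = b.val := by simpa using h3
    exact Subtype.ext h4
  · intro u
    obtain ⟨⟨a, ha⟩, hmk⟩ := (mk_bijective hr).2 (u : Polynomial Fq ⧸ Ideal.span {r})
    have hmk' : Ideal.Quotient.mk (Ideal.span {r}) a = (u : Polynomial Fq ⧸ Ideal.span {r}) := hmk
    have hcop : IsCoprime a r := isUnit_mk_iff.mp (hmk' ▸ u.isUnit)
    exact ⟨⟨a, ha, hcop⟩, Units.ext (by simpa [IsUnit.unit_spec] using hmk)⟩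

end PhiAux
namespace PhiAux
variable {Fq : Type} [Field Fq] [Fintype Fq] [DecidableEq Fq]

def CP (Fq : Type) [Field Fq] (n : ℕ) : Set (Polynomial Fq × Polynomial Fq) :=
  {x | x.2.Monic ∧ x.2.natDegree = n ∧ x.1.degree < (n : ℕ) ∧ IsCoprime x.1 x.2}

def AP (Fq : Type) [Field Fq] (n : ℕ) : Set (Polynomial Fq × Polynomial Fq) :=
  {x | x.2.Monic ∧ x.2.natDegree = n ∧ x.1.degree < (n : ℕ)}

-- the main bijection
noncomputable def mainEquiv (n : ℕ) :
    (Σ k : Fin (n + 1), MD Fq k × CP Fq (n - k)) ≃ AP Fq n := by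
  refine Equiv.ofBijective (fun x =>
    ⟨(x.2.1.val * x.2.2.val.1, x.2.1.val * x.2.2.val.2), ?_, ?_, ?_⟩) ⟨?_, ?_⟩
  · exact x.2.1.prop.1.mul x.2.2.prop.1
  · rw [x.2.1.prop.1.natDegree_mul x.2.2.prop.1, x.2.1.prop.2, x.2.2.prop.2.1]
    omega
  · -- degree (d * a') < n
    obtain ⟨k, d, x⟩ := x
    rcases eq_or_ne x.val.1 0 with h0 | h0
    · simp only [h0, mul_zero, degree_zero]
      exact WithBot.bot_lt_coe n
    · have hd0 : d.val ≠ 0 := d.prop.1.ne_zero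
      have hne : d.val * x.val.1 ≠ 0 := mul_ne_zero hd0 h0
      rw [← natDegree_lt_iff_degree_lt hne, natDegree_mul hd0 h0, d.prop.2]
      have := (natDegree_lt_iff_degree_lt h0).mpr x.prop.2.2.1
      omega
  · -- injective
    rintro ⟨k₁, d₁, x₁⟩ ⟨k₂, d₂, x₂⟩ h
    have ha : d₁.val * x₁.val.1 = d₂.val * x₂.val.1 := congrArg (fun y => y.val.1) h
    have hr : d₁.val * x₁.val.2 = d₂.val * x₂.val.2 := congrArg (fun y => y.val.2) h
    have key : ∀ (k : Fin (n+1)) (d : MD Fq k) (x : CP Fq (n - k)),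
        gcd (d.val * x.val.1) (d.val * x.val.2) = d.val := by
      intro k d x
      have h1 : gcd x.val.1 x.val.2 = 1 := by
        have hu : IsUnit (gcd x.val.1 x.val.2) := (gcd_isUnit_iff _ _).mpr x.prop.2.2.2
        have hne : gcd x.val.1 x.val.2 ≠ 0 := hu.ne_zero
        have hm : (gcd x.val.1 x.val.2).Monic := by
          have := Polynomial.monic_normalize (p := gcd x.val.1 x.val.2) hne
          rwa [normalize_gcd] at this
        exact hm.eq_one_of_isUnit hu
      rw [gcd_mul_left, h1, mul_one, d.prop.1.normalize_eq_self]
    have hd : d₁.val = d₂.val := by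
      have := key k₁ d₁ x₁
      rw [ha, hr, key k₂ d₂ x₂] at this
      exact this.symm
    have hk : k₁ = k₂ := by
      apply Fin.ext
      rw [← d₁.prop.2, ← d₂.prop.2, hd]
    subst hk
    have hd0 : d₁.val ≠ 0 := d₁.prop.1.ne_zero
    have hx1 : x₁.val.1 = x₂.val.1 := mul_left_cancel₀ hd0 (by rw [ha, hd])
    have hx2 : x₁.val.2 = x₂.val.2 := mul_left_cancel₀ hd0 (by rw [hr, hd])
    have : d₁ = d₂ := Subtype.ext hd
    subst this
    have : x₁ = x₂ := Subtype.ext (Prod.ext hx1 hx2)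
    subst this
    rfl
  · -- surjective
    rintro ⟨⟨a, r⟩, hm, hdeg, hlt⟩
    simp only at hm hdeg hlt
    rcases eq_or_ne a 0 with rfl | ha
    · refine ⟨⟨⟨n, by omega⟩, ⟨r, hm, hdeg⟩, ⟨(0, 1), ?_⟩⟩, ?_⟩
      · refine ⟨monic_one, by simp, ?_, isCoprime_zero_left.mpr isUnit_one⟩
        simp [WithBot.bot_lt_coe]
      · exact Subtype.ext (by simp)
    · set g := gcd a r with hg
      have hr0 : r ≠ 0 := hm.ne_zero
      have hg0 : g ≠ 0 := fun h => hr0 ((gcd_eq_zero_iff a r).mp h).2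
      have hgm : g.Monic := by
        have := Polynomial.monic_normalize (p := g) hg0
        rwa [normalize_gcd] at this
      have haa : g * (a / g) = a := EuclideanDomain.mul_div_cancel' hg0 (gcd_dvd_left a r)
      have hrr : g * (r / g) = r := EuclideanDomain.mul_div_cancel' hg0 (gcd_dvd_right a r)
      have hkn : g.natDegree ≤ n := hdeg ▸ natDegree_le_of_dvd (gcd_dvd_right a r) hr0
      have hr'm : (r / g).Monic := hgm.of_mul_monic_left (hrr.symm ▸ hm)
      have ha' : a / g ≠ 0 := fun h => ha (by rw [← haa, h, mul_zero])
      have hna : a.natDegree = g.natDegree + (a / g).natDegree := by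
        conv_lhs => rw [← haa]
        exact natDegree_mul hg0 ha'
      have hnr : r.natDegree = g.natDegree + (r / g).natDegree := by
        conv_lhs => rw [← hrr]
        exact natDegree_mul hg0 hr'm.ne_zero
      have hnalt : a.natDegree < n := (natDegree_lt_iff_degree_lt ha).mpr hlt
      have hcop : IsCoprime (a / g) (r / g) := by
        have h2 := gcd_mul_left g (a / g) (r / g)
        rw [haa, hrr, hgm.normalize_eq_self, ← hg] at h2
        have h3 : gcd (a / g) (r / g) = 1 :=
          mul_left_cancel₀ hg0 (by rw [← h2, mul_one])
        rw [← gcd_isUnit_iff, h3]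
        exact isUnit_one
      refine ⟨⟨⟨g.natDegree, by omega⟩, ⟨g, hgm, rfl⟩, ⟨(a / g, r / g), ?_, ?_, ?_, hcop⟩⟩, ?_⟩
      · exact hr'm
      · simp only
        omega
      · simp only
        rw [← natDegree_lt_iff_degree_lt ha']
        omega
      · exact Subtype.ext (Prod.ext haa hrr)
end PhiAux

namespace PhiAux
variable {Fq : Type} [Field Fq] [Fintype Fq]

def APEquiv (n : ℕ) : AP Fq n ≃ degLT Fq n × MD Fq n where
  toFun x := (⟨x.val.1, x.prop.2.2⟩, ⟨x.val.2, x.prop.1, x.prop.2.1⟩)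
  invFun y := ⟨(y.1.val, y.2.val), y.2.prop.1, y.2.prop.2, y.1.prop⟩
  left_inv x := rfl
  right_inv y := rfl

lemma AP_finite (n : ℕ) : (AP Fq n).Finite := by
  haveI := (degLT_finite (Fq := Fq) n).to_subtype
  haveI := (MD_finite (Fq := Fq) n).to_subtype
  exact Set.finite_coe_iff.mp ((APEquiv n).finite_iff.mpr inferInstance)

lemma CP_finite (n : ℕ) : (CP Fq n).Finite :=
  (AP_finite n).subset fun x hx => ⟨hx.1, hx.2.1, hx.2.2.1⟩

lemma card_AP (n : ℕ) :
    Nat.card (AP Fq n) = Fintype.card Fq ^ n * Fintype.card Fq ^ n := by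
  rw [Nat.card_congr (APEquiv (Fq := Fq) n), Nat.card_prod, card_degLT, card_MD]

/-- F n = number of coprime pairs at level n -/
noncomputable def F (Fq : Type) [Field Fq] (n : ℕ) : ℕ := Nat.card (CP Fq n)

def CPEquiv (n : ℕ) : CP Fq n ≃
    Σ r : MD Fq n, {a : Polynomial Fq // a.degree < (n : ℕ) ∧ IsCoprime a r.val} where
  toFun x := ⟨⟨x.val.2, x.prop.1, x.prop.2.1⟩, ⟨x.val.1, x.prop.2.2.1, x.prop.2.2.2⟩⟩
  invFun y := ⟨(y.2.val, y.1.val), y.1.prop.1, y.1.prop.2, y.2.prop.1, y.2.prop.2⟩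
  left_inv x := rfl
  right_inv y := rfl

lemma Cop_finite {r : Polynomial Fq} (hm : r.Monic) : (Cop r).Finite := by
  apply (degLT_finite (Fq := Fq) (r.natDegree)).subset
  intro a ha
  have : r.degree = (r.natDegree : ℕ) := degree_eq_natDegree hm.ne_zero
  exact lt_of_lt_of_le ha.1 (le_of_eq this)

lemma sum_polyPhi_eq_F (n : ℕ) :
    ∑ r ∈ (MD_finite (Fq := Fq) n).toFinset, polyPhi r = F Fq n := by
  classical
  letI : Fintype (MD Fq n) := (MD_finite n).fintype
  letI : ∀ r : MD Fq n,
      Fintype {a : Polynomial Fq // a.degree < (n : ℕ) ∧ IsCoprime a r.val} := by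
    intro r
    have hf : Finite ↥{a : Polynomial Fq | a.degree < (n : ℕ) ∧ IsCoprime a r.val} :=
      (((degLT_finite (Fq := Fq) n).subset (fun a ha => ha.1))).to_subtype
    exact @Fintype.ofFinite _ hf
  symm
  rw [F, Nat.card_congr (CPEquiv (Fq := Fq) n), Nat.card_eq_fintype_card,
    Fintype.card_sigma]
  have hcard : ∀ r : MD Fq n,
      Fintype.card {a : Polynomial Fq // a.degree < (n : ℕ) ∧ IsCoprime a r.val}
        = polyPhi r.val := by
    intro r
    have hdeg : r.val.degree = (n : ℕ) := by
      rw [degree_eq_natDegree r.prop.1.ne_zero, r.prop.2]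
    rw [← Nat.card_eq_fintype_card, polyPhi_eq_card_Cop r.prop.1]
    exact Nat.card_congr (Equiv.subtypeEquivRight fun a => by rw [Cop]; simp [hdeg])
  rw [Finset.sum_congr rfl fun r _ => hcard r]
  rw [(MD_finite (Fq := Fq) n).toFinset_eq_toFinset, ← Finset.sum_set_coe]

end PhiAux

namespace PhiAux
variable {Fq : Type} [Field Fq] [Fintype Fq]

lemma G_eq (n : ℕ) :
    ∑ k ∈ Finset.range (n + 1), Fintype.card Fq ^ k * F Fq (n - k)
      = Fintype.card Fq ^ n * Fintype.card Fq ^ n := by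
  classical
  letI : ∀ k : Fin (n + 1), Fintype (MD Fq (k : ℕ)) := fun k => (MD_finite _).fintype
  letI : ∀ k : Fin (n + 1), Fintype (CP Fq (n - (k : ℕ))) := fun k => (CP_finite _).fintype
  rw [← card_AP (Fq := Fq) n, ← Nat.card_congr (mainEquiv (Fq := Fq) n),
    Nat.card_eq_fintype_card, Fintype.card_sigma,
    ← Fin.sum_univ_eq_sum_range (fun k => Fintype.card Fq ^ k * F Fq (n - k)) (n + 1)]
  refine Finset.sum_congr rfl fun k _ => ?_
  rw [Fintype.card_prod, F, ← Nat.card_eq_fintype_card (α := MD Fq (k : ℕ)),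
    ← Nat.card_eq_fintype_card (α := CP Fq (n - (k : ℕ))), card_MD]

lemma F_zero : F Fq 0 = 1 := by
  have := G_eq (Fq := Fq) 0
  simpa using this

lemma F_succ_add (n : ℕ) :
    F Fq (n + 1) + Fintype.card Fq * (Fintype.card Fq ^ n * Fintype.card Fq ^ n)
      = Fintype.card Fq ^ (n + 1) * Fintype.card Fq ^ (n + 1) := by
  have h1 := G_eq (Fq := Fq) (n + 1)
  have h2 := G_eq (Fq := Fq) n
  rw [Finset.sum_range_succ'] at h1
  simp only [pow_zero, one_mul, Nat.sub_zero] at h1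
  have h3 : ∀ i, Fintype.card Fq ^ (i + 1) * F Fq (n + 1 - (i + 1))
      = Fintype.card Fq * (Fintype.card Fq ^ i * F Fq (n - i)) := by
    intro i
    have : n + 1 - (i + 1) = n - i := by omega
    rw [this, pow_succ]
    ring
  rw [Finset.sum_congr rfl fun i _ => h3 i, ← Finset.mul_sum, h2] at h1
  omega

end PhiAux

open PhiAux

/-- For `M ≥ 0`, the sum over monic `r` with `deg r ≤ M` of `φ(r)/q^{2·deg r}`
equals `1 + M(q-1)/q`. -/
theorem phi_sum_c_two (Fq : Type) [Field Fq] [Fintype Fq] (M : ℕ) :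
    ∑ᶠ r ∈ {r : Polynomial Fq | r.Monic ∧ r.natDegree ≤ M},
        (polyPhi r : ℚ) / (Fintype.card Fq : ℚ) ^ (2 * r.natDegree) =
      1 + M * ((Fintype.card Fq : ℚ) - 1) / (Fintype.card Fq : ℚ) := by
  classical
  set q : ℕ := Fintype.card Fq with hq
  have hq0 : 0 < q := Fintype.card_pos
  have hqQ : (q : ℚ) ≠ 0 := Nat.cast_ne_zero.mpr hq0.ne'
  have hS : {r : Polynomial Fq | r.Monic ∧ r.natDegree ≤ M}.Finite := by
    apply (degLT_finite (Fq := Fq) (M + 1)).subset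
    intro r hr
    have : r.degree = (r.natDegree : ℕ) := degree_eq_natDegree hr.1.ne_zero
    show r.degree < ((M + 1 : ℕ) : WithBot ℕ)
    rw [this]
    exact_mod_cast Nat.lt_succ_of_le hr.2
  rw [finsum_mem_eq_finite_toFinset_sum _ hS]
  have hmap : ∀ r ∈ hS.toFinset, r.natDegree ∈ Finset.range (M + 1) := by
    intro r hr
    rw [Set.Finite.mem_toFinset] at hr
    exact Finset.mem_range.mpr (Nat.lt_succ_of_le hr.2)
  rw [← Finset.sum_fiberwise_of_maps_to hmap
    (fun r => (polyPhi r : ℚ) / (q : ℚ) ^ (2 * r.natDegree))]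
  have hfib : ∀ n ∈ Finset.range (M + 1),
      hS.toFinset.filter (fun r => r.natDegree = n) = (MD_finite (Fq := Fq) n).toFinset := by
    intro n hn
    have hnM := Finset.mem_range.mp hn
    ext r
    simp only [Finset.mem_filter, Set.Finite.mem_toFinset, Set.mem_setOf_eq, MD]
    constructor
    · rintro ⟨⟨h1, _⟩, h3⟩; exact ⟨h1, h3⟩
    · rintro ⟨h1, h2⟩; exact ⟨⟨h1, by omega⟩, h2⟩
  have hslice : ∀ n ∈ Finset.range (M + 1),
      (∑ r ∈ hS.toFinset.filter (fun r => r.natDegree = n),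
        (polyPhi r : ℚ) / (q : ℚ) ^ (2 * r.natDegree)) = (F Fq n : ℚ) / (q : ℚ) ^ (2 * n) := by
    intro n hn
    rw [hfib n hn]
    have : ∀ r ∈ (MD_finite (Fq := Fq) n).toFinset,
        (polyPhi r : ℚ) / (q : ℚ) ^ (2 * r.natDegree)
          = (polyPhi r : ℚ) / (q : ℚ) ^ (2 * n) := by
      intro r hr
      rw [Set.Finite.mem_toFinset] at hr
      rw [hr.2]
    rw [Finset.sum_congr rfl this, ← Finset.sum_div, ← Nat.cast_sum,
      sum_polyPhi_eq_F]
  rw [Finset.sum_congr rfl hslice, Finset.sum_range_succ']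
  have h0 : (F Fq 0 : ℚ) / (q : ℚ) ^ (2 * 0) = 1 := by
    rw [F_zero]; simp
  have hsucc : ∀ i, (F Fq (i + 1) : ℚ) / (q : ℚ) ^ (2 * (i + 1))
      = ((q : ℚ) - 1) / (q : ℚ) := by
    intro i
    have := F_succ_add (Fq := Fq) i
    have hcast : (F Fq (i + 1) : ℚ)
        = (q : ℚ) ^ (i + 1) * (q : ℚ) ^ (i + 1) - (q : ℚ) * ((q : ℚ) ^ i * (q : ℚ) ^ i) := by
      have := congrArg (Nat.cast : ℕ → ℚ) this
      push_cast at this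
      linarith
    rw [hcast]
    field_simp
    ring
  rw [Finset.sum_congr rfl fun i _ => hsucc i, h0, Finset.sum_const, Finset.card_range,
    nsmul_eq_mul]
  ring
end

section
/- Let M be a nonnegative integer. Then the sum over all monic polynomials r ∈ 𝔽_q[t] with deg(r) ≤ M of (−1)^{deg(r)} · φ(r)/q^{2·deg(r)} equals 1 if M is even and equals 1/q if M is odd. -/
open Polynomial

namespace PhiAux

lemma natCard_sigma {ι : Type} [Fintype ι] (f : ι → Type) [∀ i, Finite (f i)] :
    Nat.card (Σ i, f i) = ∑ i, Nat.card (f i) := by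
  letI := fun i => Fintype.ofFinite (f i)
  simp [Nat.card_eq_fintype_card]

lemma isUnit_mk_iff_s5 {R : Type*} [CommRing R] (r b : R) :
    IsUnit (Ideal.Quotient.mk (Ideal.span {r}) b) ↔ IsCoprime b r := by
  constructor
  · intro h
    obtain ⟨c, hc⟩ := isUnit_iff_exists_inv.mp h
    obtain ⟨v, rfl⟩ := Ideal.Quotient.mk_surjective c
    rw [← map_mul, show (1 : _ ⧸ _) = Ideal.Quotient.mk (Ideal.span {r}) 1 from rfl,
      Ideal.Quotient.eq] at hc
    obtain ⟨w, hw⟩ := Ideal.mem_span_singleton'.mp hc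
    exact ⟨v, -w, by linear_combination -hw⟩
  · rintro ⟨u, v, h⟩
    have h1 : Ideal.Quotient.mk (Ideal.span {r}) r = 0 :=
      Ideal.Quotient.eq_zero_iff_mem.mpr (Ideal.mem_span_singleton_self r)
    refine IsUnit.of_mul_eq_one (Ideal.Quotient.mk _ u) ?_
    have hb : b * u = 1 - v * r := by linear_combination h
    rw [← map_mul, hb, map_sub, map_one, map_mul, h1, mul_zero, sub_zero]

/-- Monic polynomials of degree `n`. -/
abbrev MonicOf (Fq : Type) [Field Fq] (n : ℕ) : Type :=
  {p : Polynomial Fq // p.Monic ∧ p.natDegree = n}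

/-- Coprime pairs `(r, b)` with `r` monic of degree `n` and `deg b < n`. -/
abbrev CoP (Fq : Type) [Field Fq] (n : ℕ) : Type :=
  {x : Polynomial Fq × Polynomial Fq //
    x.1.Monic ∧ x.1.natDegree = n ∧ x.2 ∈ degreeLT Fq n ∧ IsCoprime x.2 x.1}

variable {Fq : Type} [Field Fq] [Fintype Fq]

instance (n : ℕ) : Finite (degreeLT Fq n) :=
  Finite.of_equiv _ (degreeLTEquiv Fq n).toEquiv.symm

lemma card_degreeLT (n : ℕ) : Nat.card (degreeLT Fq n) = Fintype.card Fq ^ n := by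
  rw [Nat.card_congr (degreeLTEquiv Fq n).toEquiv, Nat.card_eq_fintype_card,
    Fintype.card_fun, Fintype.card_fin]

instance (n : ℕ) : Finite (MonicOf Fq n) :=
  Finite.of_equiv _ (monicEquivDegreeLT n).symm

lemma card_monicOf (n : ℕ) : Nat.card (MonicOf Fq n) = Fintype.card Fq ^ n := by
  rw [Nat.card_congr (monicEquivDegreeLT n), card_degreeLT]

instance (n : ℕ) : Finite (CoP Fq n) := by
  refine Finite.of_injective (fun x => ((⟨x.1.1, x.2.1, x.2.2.1⟩ : MonicOf Fq n),
    (⟨x.1.2, x.2.2.2.1⟩ : degreeLT Fq n))) ?_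
  rintro ⟨⟨a, b⟩, _⟩ ⟨⟨c, d⟩, _⟩ h
  simp only [Prod.mk.injEq, Subtype.mk.injEq] at h
  exact Subtype.ext (Prod.ext h.1 h.2)

omit [Fintype Fq] in
lemma polyPhi_eq (r : Polynomial Fq) (hr : r.Monic) (n : ℕ) (hn : r.natDegree = n) :
    polyPhi r = Nat.card {b : Polynomial Fq // b ∈ degreeLT Fq n ∧ IsCoprime b r} := by
  subst hn
  refine (Nat.card_congr (Equiv.ofBijective
    (fun b => ((isUnit_mk_iff_s5 r b.1).mpr b.2.2).unit) ⟨?_, ?_⟩)).symm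
  · intro b₁ b₂ h
    have h' : Ideal.Quotient.mk (Ideal.span {r}) b₁.1 = Ideal.Quotient.mk _ b₂.1 := by
      have := congrArg Units.val h
      simpa [IsUnit.unit_spec] using this
    have hd : r ∣ (b₁.1 - b₂.1) := Ideal.mem_span_singleton.mp (Ideal.Quotient.eq.mp h')
    have hdeg : (b₁.1 - b₂.1).degree < r.degree := by
      rw [degree_eq_natDegree hr.ne_zero]
      exact lt_of_le_of_lt (degree_sub_le _ _)
        (max_lt (mem_degreeLT.mp b₁.2.1) (mem_degreeLT.mp b₂.2.1))
    have := eq_zero_of_dvd_of_degree_lt hd hdeg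
    exact Subtype.ext (sub_eq_zero.mp this)
  · intro u
    obtain ⟨c, hc⟩ := Ideal.Quotient.mk_surjective (u : Polynomial Fq ⧸ Ideal.span {r})
    have hmk : Ideal.Quotient.mk (Ideal.span {r}) (c %ₘ r) = Ideal.Quotient.mk _ c := by
      rw [Ideal.Quotient.eq]
      refine Ideal.mem_span_singleton.mpr ⟨-(c /ₘ r), ?_⟩
      rw [modByMonic_eq_sub_mul_div c r]; ring
    have hdeg : c %ₘ r ∈ degreeLT Fq r.natDegree := by
      rw [mem_degreeLT, ← degree_eq_natDegree hr.ne_zero]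
      exact degree_modByMonic_lt c hr
    have hcop : IsCoprime (c %ₘ r) r := by
      rw [← isUnit_mk_iff_s5, hmk, hc]; exact u.isUnit
    refine ⟨⟨c %ₘ r, hdeg, hcop⟩, Units.ext ?_⟩
    simp [IsUnit.unit_spec, hmk, hc]

section Bij
variable [DecidableEq Fq]

omit [Fintype Fq] in
lemma gcd_eq_of_coprime (g r' b' : Polynomial Fq) (hg : g.Monic) (hcop : IsCoprime b' r') :
    gcd (g * r') (g * b') = g := by
  have h1 : gcd r' b' = 1 := by
    rw [← normalize_gcd, normalize_eq_one]
    exact (gcd_isUnit_iff r' b').mpr hcop.symm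
  rw [gcd_mul_left, h1, mul_one, hg.normalize_eq_self]

noncomputable def bigMap (n : ℕ) (x : Σ k : Fin (n + 1), MonicOf Fq k.1 × CoP Fq (n - k.1)) :
    MonicOf Fq n × degreeLT Fq n :=
  ⟨⟨x.2.1.1 * x.2.2.1.1, x.2.1.2.1.mul x.2.2.2.1, by
      have hk : (x.1 : ℕ) ≤ n := Nat.lt_succ_iff.mp x.1.isLt
      rw [natDegree_mul x.2.1.2.1.ne_zero x.2.2.2.1.ne_zero, x.2.1.2.2, x.2.2.2.2.1]
      omega⟩,
   ⟨x.2.1.1 * x.2.2.1.2, by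
      obtain ⟨⟨k, hk'⟩, ⟨g, hgm, hgd⟩, ⟨⟨r', b'⟩, hr'm, hr'd, hb', hcop⟩⟩ := x
      simp only [Fin.val_mk] at *
      have hk : k ≤ n := Nat.lt_succ_iff.mp hk'
      by_cases hb0 : b' = 0
      · simp [hb0]
      · rw [mem_degreeLT, degree_mul, degree_eq_natDegree hgm.ne_zero,
          degree_eq_natDegree hb0]
        have h2 : b'.natDegree < n - k := by
          have := mem_degreeLT.mp hb'
          rwa [degree_eq_natDegree hb0, Nat.cast_lt] at this
        rw [← Nat.cast_add, Nat.cast_lt, hgd]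
        have hfin : ((⟨k, hk'⟩ : Fin (n+1)) : ℕ) = k := rfl
        omega⟩⟩

omit [Fintype Fq] in
lemma bigMap_bijective (n : ℕ) : Function.Bijective (bigMap (Fq := Fq) n) := by
  constructor
  · rintro ⟨⟨k₁, hk₁⟩, ⟨g₁, hg₁m, hg₁d⟩, ⟨⟨r₁, b₁⟩, hr₁m, hr₁d, hb₁, hcop₁⟩⟩
      ⟨⟨k₂, hk₂⟩, ⟨g₂, hg₂m, hg₂d⟩, ⟨⟨r₂, b₂⟩, hr₂m, hr₂d, hb₂, hcop₂⟩⟩ h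
    simp only [bigMap, Prod.mk.injEq, Subtype.mk.injEq] at h
    obtain ⟨hr, hb⟩ := h
    have hg : g₁ = g₂ := by
      rw [← gcd_eq_of_coprime g₁ r₁ b₁ hg₁m hcop₁, ← gcd_eq_of_coprime g₂ r₂ b₂ hg₂m hcop₂,
        hr, hb]
    have hk : k₁ = k₂ := by
      rw [show k₁ = ((⟨k₁, hk₁⟩ : Fin (n+1)) : ℕ) from rfl,
        show k₂ = ((⟨k₂, hk₂⟩ : Fin (n+1)) : ℕ) from rfl, ← hg₁d, ← hg₂d, hg]
    subst hk
    subst hg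
    have hr' : r₁ = r₂ := mul_left_cancel₀ hg₁m.ne_zero hr
    have hb' : b₁ = b₂ := mul_left_cancel₀ hg₁m.ne_zero hb
    subst hr'; subst hb'
    rfl
  · rintro ⟨⟨r, hrm, hrn⟩, ⟨b, hb⟩⟩
    have hr0 : r ≠ 0 := hrm.ne_zero
    set g := gcd r b with hgdef
    have hg0 : g ≠ 0 := gcd_ne_zero_of_left hr0
    have hgm : g.Monic := by
      rw [hgdef, ← normalize_gcd]; exact monic_normalize (hgdef ▸ hg0)
    have hk : g.natDegree ≤ n := hrn ▸ natDegree_le_of_dvd (gcd_dvd_left r b) hr0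
    have hr' : g * (r / g) = r := EuclideanDomain.mul_div_cancel' hg0 (gcd_dvd_left r b)
    have hb' : g * (b / g) = b := EuclideanDomain.mul_div_cancel' hg0 (gcd_dvd_right r b)
    have hr'm : (r / g).Monic := hgm.of_mul_monic_left (by rwa [hr'])
    have hr'd : (r / g).natDegree = n - g.natDegree := by
      have := natDegree_mul hg0 hr'm.ne_zero
      rw [hr', hrn] at this
      omega
    have hmem : b / g ∈ degreeLT Fq (n - g.natDegree) := by
      by_cases hb0 : b / g = 0
      · rw [hb0]; exact zero_mem _
      · have hbne : b ≠ 0 := hb' ▸ mul_ne_zero hg0 hb0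
        have h1 : b.natDegree = g.natDegree + (b / g).natDegree := by
          conv_lhs => rw [← hb']
          rw [natDegree_mul hg0 hb0]
        have h2 : b.natDegree < n := by
          have := mem_degreeLT.mp hb
          rwa [degree_eq_natDegree hbne, Nat.cast_lt] at this
        rw [mem_degreeLT, degree_eq_natDegree hb0, Nat.cast_lt]
        omega
    have hcop : IsCoprime (b / g) (r / g) := by
      have h3 : gcd (g * (r / g)) (g * (b / g)) = g := by rw [hr', hb']
      rw [gcd_mul_left, hgm.normalize_eq_self] at h3
      have h4 : gcd (r / g) (b / g) = 1 := mul_left_cancel₀ hg0 (h3.trans (mul_one g).symm)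
      exact ((gcd_isUnit_iff _ _).mp (h4 ▸ isUnit_one)).symm
    refine ⟨⟨⟨g.natDegree, Nat.lt_succ_of_le hk⟩, ⟨g, hgm, rfl⟩,
      ⟨(r / g, b / g), hr'm, hr'd, hmem, hcop⟩⟩, ?_⟩
    simp only [bigMap, Prod.mk.injEq, Subtype.mk.injEq]
    exact ⟨hr', hb'⟩

end Bij

lemma card_key (n : ℕ) :
    (Fintype.card Fq) ^ (2 * n) =
      ∑ k ∈ Finset.range (n + 1), Fintype.card Fq ^ k * Nat.card (CoP Fq (n - k)) := by
  classical
  have h1 : Nat.card (MonicOf Fq n × degreeLT Fq n) = Fintype.card Fq ^ (2 * n) := by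
    rw [Nat.card_prod, card_monicOf, card_degreeLT, ← pow_add, two_mul]
  rw [← h1, ← Nat.card_congr (Equiv.ofBijective _ (bigMap_bijective (Fq := Fq) n)),
    natCard_sigma,
    ← Fin.sum_univ_eq_sum_range (fun k => Fintype.card Fq ^ k * Nat.card (CoP Fq (n - k)))]
  exact Finset.sum_congr rfl fun k _ => by rw [Nat.card_prod, card_monicOf]

def copEquivSigma (n : ℕ) :
    CoP Fq n ≃ Σ r : MonicOf Fq n,
      {b : Polynomial Fq // b ∈ degreeLT Fq n ∧ IsCoprime b r.1} where
  toFun x := ⟨⟨x.1.1, x.2.1, x.2.2.1⟩, ⟨x.1.2, x.2.2.2.1, x.2.2.2.2⟩⟩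
  invFun y := ⟨(y.1.1, y.2.1), y.1.2.1, y.1.2.2, y.2.2.1, y.2.2.2⟩
  left_inv _ := rfl
  right_inv _ := rfl

instance (n : ℕ) (r : Polynomial Fq) :
    Finite {b : Polynomial Fq // b ∈ degreeLT Fq n ∧ IsCoprime b r} :=
  Finite.of_injective (fun b => (⟨b.1, b.2.1⟩ : degreeLT Fq n))
    (fun a b h => by
      apply Subtype.ext
      have := congrArg Subtype.val h
      simpa using this)

lemma sum_polyPhi (n : ℕ) (T : Finset (Polynomial Fq))
    (hT : ∀ p, p ∈ T ↔ (p.Monic ∧ p.natDegree = n)) :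
    ∑ r ∈ T, polyPhi r = Nat.card (CoP Fq n) := by
  letI : Fintype (MonicOf Fq n) := Fintype.ofFinite _
  rw [Finset.sum_subtype T hT polyPhi, Nat.card_congr (copEquivSigma (Fq := Fq) n),
    natCard_sigma]
  exact Finset.sum_congr rfl fun r _ => polyPhi_eq r.1 r.2.1 n r.2.2

/-- `B n = ∑_{j ≤ n} q^{n-j} S j = q^{2n}`. -/
lemma B_eq (n : ℕ) :
    ∑ j ∈ Finset.range (n + 1),
        (Fintype.card Fq : ℚ) ^ (n - j) * (Nat.card (CoP Fq j) : ℚ) =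
      (Fintype.card Fq : ℚ) ^ (2 * n) := by
  have h := card_key (Fq := Fq) n
  have h' : ((Fintype.card Fq ^ (2 * n) : ℕ) : ℚ) =
      ∑ k ∈ Finset.range (n + 1),
        (Fintype.card Fq : ℚ) ^ k * (Nat.card (CoP Fq (n - k)) : ℚ) := by
    rw [h]; push_cast; ring_nf
  rw [← Finset.sum_range_reflect]
  have h'' : ∀ j ∈ Finset.range (n + 1),
      (Fintype.card Fq : ℚ) ^ (n - (n + 1 - 1 - j)) * (Nat.card (CoP Fq (n + 1 - 1 - j)) : ℚ)
        = (Fintype.card Fq : ℚ) ^ j * (Nat.card (CoP Fq (n - j)) : ℚ) := by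
    intro j hj
    have hj' : j ≤ n := Nat.lt_succ_iff.mp (Finset.mem_range.mp hj)
    congr 2 <;> omega
  rw [Finset.sum_congr rfl h'', ← h']
  push_cast; ring

lemma S_zero : Nat.card (CoP Fq 0) = 1 := by
  have h := B_eq (Fq := Fq) 0
  simp at h
  exact_mod_cast h

lemma S_succ (n : ℕ) :
    (Nat.card (CoP Fq (n + 1)) : ℚ) =
      (Fintype.card Fq : ℚ) ^ (2 * (n + 1)) - (Fintype.card Fq : ℚ) ^ (2 * n + 1) := by
  have hB := B_eq (Fq := Fq) (n + 1)
  have hB' := B_eq (Fq := Fq) n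
  rw [Finset.sum_range_succ] at hB
  have hsplit : ∑ j ∈ Finset.range (n + 1),
      (Fintype.card Fq : ℚ) ^ (n + 1 - j) * (Nat.card (CoP Fq j) : ℚ)
      = (Fintype.card Fq : ℚ) * ∑ j ∈ Finset.range (n + 1),
        (Fintype.card Fq : ℚ) ^ (n - j) * (Nat.card (CoP Fq j) : ℚ) := by
    rw [Finset.mul_sum]
    refine Finset.sum_congr rfl fun j hj => ?_
    have hj' : j ≤ n := Nat.lt_succ_iff.mp (Finset.mem_range.mp hj)
    rw [show n + 1 - j = (n - j) + 1 by omega, pow_succ]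
    ring
  rw [hsplit, hB'] at hB
  have : (Fintype.card Fq : ℚ) * (Fintype.card Fq : ℚ) ^ (2 * n)
      = (Fintype.card Fq : ℚ) ^ (2 * n + 1) := by rw [pow_succ]; ring
  simp only [Nat.sub_self, pow_zero, one_mul] at hB
  linarith [hB, this]

end PhiAux

/-- For `M ≥ 0`, the sum over monic `r` with `deg r ≤ M` of
`(-1)^{deg r}·φ(r)/q^{2·deg r}` equals `1` if `M` is even and `1/q` if `M` is odd. -/
theorem phi_alt_sum_c_two (Fq : Type) [Field Fq] [Fintype Fq] (M : ℕ) :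
    ∑ᶠ r ∈ {r : Polynomial Fq | r.Monic ∧ r.natDegree ≤ M},
        (-1 : ℚ) ^ r.natDegree * (polyPhi r : ℚ) / (Fintype.card Fq : ℚ) ^ (2 * r.natDegree) =
      if Even M then 1 else 1 / (Fintype.card Fq : ℚ) := by
  classical
  have hq0 : (Fintype.card Fq : ℚ) ≠ 0 := Nat.cast_ne_zero.mpr Fintype.card_ne_zero
  set f : Polynomial Fq → ℚ := fun r =>
    (-1 : ℚ) ^ r.natDegree * (polyPhi r : ℚ) / (Fintype.card Fq : ℚ) ^ (2 * r.natDegree)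
    with hf
  set s : Set (Polynomial Fq) := {r : Polynomial Fq | r.Monic ∧ r.natDegree ≤ M} with hs
  haveI : Finite ↥s := by
    refine Finite.of_injective (fun p : ↥s => (⟨p.1, ?_⟩ : degreeLT Fq (M + 1))) ?_
    · rw [mem_degreeLT]
      refine lt_of_le_of_lt degree_le_natDegree ?_
      exact_mod_cast Nat.lt_succ_of_le p.2.2
    · intro a b h
      exact Subtype.ext (by simpa using congrArg Subtype.val h)
  have hfin : s.Finite := Set.toFinite s
  have h1 : ∑ᶠ r ∈ s, f r = ∑ r ∈ hfin.toFinset, f r := by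
    conv_lhs => rw [← hfin.coe_toFinset]
    rw [finsum_mem_coe_finset]
  have hmem : ∀ p, p ∈ hfin.toFinset ↔ (p.Monic ∧ p.natDegree ≤ M) := fun p => by
    rw [Set.Finite.mem_toFinset]; exact Iff.rfl
  have h2 : ∑ r ∈ hfin.toFinset, f r
      = ∑ n ∈ Finset.range (M + 1),
          ∑ r ∈ hfin.toFinset.filter (fun r => r.natDegree = n), f r :=
    (Finset.sum_fiberwise_of_maps_to (fun r hr =>
      Finset.mem_range.mpr (Nat.lt_succ_of_le ((hmem r).mp hr).2)) f).symm
  have h3 : ∀ n ∈ Finset.range (M + 1),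
      ∑ r ∈ hfin.toFinset.filter (fun r => r.natDegree = n), f r
        = (-1 : ℚ) ^ n * (Nat.card (PhiAux.CoP Fq n) : ℚ)
            / (Fintype.card Fq : ℚ) ^ (2 * n) := by
    intro n hn
    have hn' : n ≤ M := Nat.lt_succ_iff.mp (Finset.mem_range.mp hn)
    have hT : ∀ p, p ∈ hfin.toFinset.filter (fun r => r.natDegree = n)
        ↔ (p.Monic ∧ p.natDegree = n) := by
      intro p
      rw [Finset.mem_filter, hmem]
      constructor
      · rintro ⟨⟨hm1, _⟩, hm2⟩; exact ⟨hm1, hm2⟩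
      · rintro ⟨hm1, hm2⟩; exact ⟨⟨hm1, hm2 ▸ hn'⟩, hm2⟩
    have hstep : ∀ r ∈ hfin.toFinset.filter (fun r => r.natDegree = n),
        f r = ((-1 : ℚ) ^ n / (Fintype.card Fq : ℚ) ^ (2 * n)) * (polyPhi r : ℚ) := by
      intro r hr
      have hrd : r.natDegree = n := ((hT r).mp hr).2
      rw [hf]; simp only; rw [hrd]; ring
    rw [Finset.sum_congr rfl hstep, ← Finset.mul_sum, ← Nat.cast_sum,
      PhiAux.sum_polyPhi n _ hT]
    ring
  have key : ∀ N : ℕ, ∑ n ∈ Finset.range (N + 1),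
      (-1 : ℚ) ^ n * (Nat.card (PhiAux.CoP Fq n) : ℚ) / (Fintype.card Fq : ℚ) ^ (2 * n)
      = if Even N then 1 else 1 / (Fintype.card Fq : ℚ) := by
    intro N
    induction N with
    | zero => simp [PhiAux.S_zero]
    | succ N ih =>
      rw [Finset.sum_range_succ, ih, PhiAux.S_succ]
      rcases Nat.even_or_odd N with hN | hN
      · rw [if_pos hN, if_neg (by simp [Nat.even_add_one, hN])]
        rw [(hN.add_one).neg_one_pow]
        field_simp
        ring
      · rw [if_neg (by simp [Nat.not_even_iff_odd.mpr hN]),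
          if_pos (Nat.even_add_one.mpr (Nat.not_even_iff_odd.mpr hN))]
        rw [(hN.add_one).neg_one_pow]
        field_simp
        ring
  rw [h1, h2, Finset.sum_congr rfl h3, key M]
end

section
/- Let M be a nonnegative integer and c a real number with c ≠ 2. Then the sum over all monic polynomials r ∈ 𝔽_q[t] with deg(r) ≤ M of (−1)^{deg(r)} φ(r)/q^{c·deg(r)} equals (1 + q^{1−c})/(1 + q^{2−c}) + (−1)^M · ((q−1)q^{1−c})/(1 + q^{2−c}) · q^{M(2−c)}. -/
open Polynomial

set_option maxHeartbeats 1000000 in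
set_option linter.unusedSectionVars false in
section

noncomputable section AuxPhiCount

variable (Fq : Type) [Field Fq] [Fintype Fq]

lemma finite_degLT (n : ℕ) : {p : Polynomial Fq | p.degree < n}.Finite := by
  have h : {p : Polynomial Fq | p.degree < n} = ↑(Polynomial.degreeLT Fq n) := by
    ext p; simp [Polynomial.mem_degreeLT]
  rw [h]
  have : Finite (Polynomial.degreeLT Fq n) :=
    Finite.of_equiv _ (Polynomial.degreeLTEquiv Fq n).toEquiv.symm
  exact Set.toFinite _

noncomputable def Ldeg (n : ℕ) : Finset (Polynomial Fq) := (finite_degLT Fq n).toFinset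

lemma mem_Ldeg {n : ℕ} {p : Polynomial Fq} : p ∈ Ldeg Fq n ↔ p.degree < n := by
  simp [Ldeg, Set.Finite.mem_toFinset]

lemma card_Ldeg (n : ℕ) : (Ldeg Fq n).card = Fintype.card Fq ^ n := by
  have h : {p : Polynomial Fq | p.degree < n} = ↑(Polynomial.degreeLT Fq n) := by
    ext p; simp [Polynomial.mem_degreeLT]
  rw [Ldeg, ← Set.ncard_eq_toFinset_card _ (finite_degLT Fq n), ← Nat.card_coe_set_eq, h]
  have e1 : (↑(Polynomial.degreeLT Fq n) : Set (Polynomial Fq)) ≃ (Fin n → Fq) :=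
    (Polynomial.degreeLTEquiv Fq n).toEquiv
  rw [Nat.card_congr e1, Nat.card_pi]
  simp

open Classical in
noncomputable def Pmon (n : ℕ) : Finset (Polynomial Fq) :=
  (Ldeg Fq (n+1)).filter (fun p => p.Monic ∧ p.natDegree = n)

lemma mem_Pmon {n : ℕ} {p : Polynomial Fq} : p ∈ Pmon Fq n ↔ p.Monic ∧ p.natDegree = n := by
  classical
  constructor
  · intro hp
    exact (Finset.mem_filter.mp hp).2
  · intro hp
    refine Finset.mem_filter.mpr ⟨?_, by simpa using hp⟩
    rw [mem_Ldeg]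
    rw [Polynomial.degree_eq_natDegree hp.1.ne_zero, hp.2]
    exact_mod_cast Nat.lt_succ_self n

lemma card_Pmon (n : ℕ) : (Pmon Fq n).card = Fintype.card Fq ^ n := by
  rw [← card_Ldeg Fq n]
  apply Finset.card_nbij' (i := fun r => r - X ^ n) (j := fun f => f + X ^ n)
  · intro r hr
    rw [Finset.mem_coe, mem_Pmon] at hr
    rw [Finset.mem_coe, mem_Ldeg, Polynomial.degree_lt_iff_coeff_zero]
    intro m hm
    rw [Polynomial.coeff_sub, Polynomial.coeff_X_pow]
    rcases eq_or_lt_of_le hm with h | h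
    · have : r.coeff n = 1 := by
        have := hr.1
        rw [Polynomial.Monic, Polynomial.leadingCoeff, hr.2] at this
        exact this
      simp [← h, this]
    · have : r.coeff m = 0 := Polynomial.coeff_eq_zero_of_natDegree_lt (hr.2 ▸ h)
      have hne : m ≠ n := by omega
      simp [this, hne]
  · intro f hf
    rw [Finset.mem_coe, mem_Ldeg] at hf
    have hdx : (f : Polynomial Fq).degree < (X ^ n : Polynomial Fq).degree := by
      rwa [Polynomial.degree_X_pow]
    have hm : (f + X ^ n : Polynomial Fq).Monic :=
      (Polynomial.monic_X_pow (R := Fq) n).add_of_right hdx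
    rw [Finset.mem_coe, mem_Pmon]
    refine ⟨hm, ?_⟩
    have : (f + X ^ n : Polynomial Fq).degree = n := by
      rw [Polynomial.degree_add_eq_right_of_degree_lt hdx, Polynomial.degree_X_pow]
    exact Polynomial.natDegree_eq_of_degree_eq_some this
  · intro r _; ring
  · intro f _; ring

lemma isUnit_mk_iff (r a : Polynomial Fq) :
    IsUnit (Ideal.Quotient.mk (Ideal.span {r}) a) ↔ IsCoprime a r := by
  constructor
  · intro h
    obtain ⟨b', hb'⟩ := h.exists_right_inv
    obtain ⟨b, rfl⟩ := Ideal.Quotient.mk_surjective b'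
    rw [← map_mul, ← map_one (Ideal.Quotient.mk (Ideal.span {r})), Ideal.Quotient.eq] at hb'
    obtain ⟨c, hc⟩ := Ideal.mem_span_singleton.mp hb'
    exact ⟨b, -c, by linear_combination hc⟩
  · rintro ⟨u, v, h⟩
    apply IsUnit.of_mul_eq_one (Ideal.Quotient.mk _ u)
    rw [← map_mul, ← map_one (Ideal.Quotient.mk (Ideal.span {r})), Ideal.Quotient.eq]
    exact Ideal.mem_span_singleton.mpr ⟨-v, by linear_combination h⟩

open Classical in
lemma polyPhi_eq_card {r : Polynomial Fq} (hr : r.Monic) :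
    polyPhi r = ((Ldeg Fq r.natDegree).filter (fun a => IsCoprime a r)).card := by
  classical
  have hdeg : r.degree = (r.natDegree : WithBot ℕ) := Polynomial.degree_eq_natDegree hr.ne_zero
  set S := (Ldeg Fq r.natDegree).filter (fun a => IsCoprime a r) with hS
  have key : ∀ a : {x // x ∈ S}, IsUnit (Ideal.Quotient.mk (Ideal.span {r}) a.1) := by
    rintro ⟨a, ha⟩
    exact (isUnit_mk_iff Fq r a).mpr (Finset.mem_filter.mp ha).2
  let f : {x // x ∈ S} → (Polynomial Fq ⧸ Ideal.span {r})ˣ := fun a => (key a).unit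
  have hf : Function.Bijective f := by
    constructor
    · rintro ⟨a1, ha1⟩ ⟨a2, ha2⟩ h
      have hv : Ideal.Quotient.mk (Ideal.span {r}) a1 = Ideal.Quotient.mk (Ideal.span {r}) a2 := by
        have := congrArg Units.val h
        simpa [f] using this
      rw [Ideal.Quotient.eq] at hv
      obtain ⟨c, hc⟩ := Ideal.mem_span_singleton.mp hv
      have hd1 : a1.degree < r.degree := by
        rw [hdeg]; exact (mem_Ldeg Fq).mp (Finset.mem_filter.mp ha1).1
      have hd2 : a2.degree < r.degree := by
        rw [hdeg]; exact (mem_Ldeg Fq).mp (Finset.mem_filter.mp ha2).1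
      have : a1 - a2 = 0 := by
        refine Polynomial.eq_zero_of_dvd_of_degree_lt ⟨c, hc⟩ ?_
        exact lt_of_le_of_lt (Polynomial.degree_sub_le a1 a2) (max_lt hd1 hd2)
      exact Subtype.ext (sub_eq_zero.mp this)
    · intro u
      obtain ⟨g, hg⟩ := Ideal.Quotient.mk_surjective (u : Polynomial Fq ⧸ Ideal.span {r})
      set a := g %ₘ r with ha
      have hmk : Ideal.Quotient.mk (Ideal.span {r}) a = u := by
        rw [← hg, Ideal.Quotient.eq]
        refine Ideal.mem_span_singleton.mpr ⟨-(g /ₘ r), ?_⟩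
        have := Polynomial.modByMonic_eq_sub_mul_div g r
        linear_combination this
      have hunit : IsUnit (Ideal.Quotient.mk (Ideal.span {r}) a) := hmk ▸ u.isUnit
      have hcop : IsCoprime a r := (isUnit_mk_iff Fq r a).mp hunit
      have hmem : a ∈ S := by
        refine Finset.mem_filter.mpr ⟨?_, hcop⟩
        rw [mem_Ldeg, ← hdeg]
        exact Polynomial.degree_modByMonic_lt g hr
      refine ⟨⟨a, hmem⟩, ?_⟩
      apply Units.ext
      simpa [f] using hmk
  rw [polyPhi, ← Nat.card_eq_of_bijective f hf]
  simp [Nat.card_eq_fintype_card]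

open Classical in
noncomputable def Cfin (n : ℕ) : Finset (Polynomial Fq × Polynomial Fq) :=
  (Pmon Fq n ×ˢ Ldeg Fq n).filter (fun p => IsCoprime p.2 p.1)

lemma mem_Cfin {n : ℕ} {p : Polynomial Fq × Polynomial Fq} :
    p ∈ Cfin Fq n ↔ (p.1.Monic ∧ p.1.natDegree = n) ∧ p.2.degree < n ∧ IsCoprime p.2 p.1 := by
  classical
  simp [Cfin, Finset.mem_filter, Finset.mem_product, mem_Pmon, mem_Ldeg, and_assoc]

lemma conv (n : ℕ) : Fintype.card Fq ^ (2*n)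
    = ∑ k ∈ Finset.range (n+1), Fintype.card Fq ^ k * (Cfin Fq (n-k)).card := by
  classical
  have lhs : Fintype.card Fq ^ (2*n) = (Pmon Fq n ×ˢ Ldeg Fq n).card := by
    rw [Finset.card_product, card_Pmon, card_Ldeg, ← pow_add, two_mul]
  have rhs : ∑ k ∈ Finset.range (n+1), Fintype.card Fq ^ k * (Cfin Fq (n-k)).card
      = ((Finset.range (n+1)).sigma (fun k => Pmon Fq k ×ˢ Cfin Fq (n-k))).card := by
    rw [Finset.card_sigma]
    refine Finset.sum_congr rfl fun k _ => ?_
    rw [Finset.card_product, card_Pmon]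
  rw [lhs, rhs]
  refine (Finset.card_bij (fun x _ => (x.2.1 * x.2.2.1, x.2.1 * x.2.2.2)) ?_ ?_ ?_).symm
  · -- maps into
    rintro ⟨k, g, r', a'⟩ hx
    simp only [Finset.mem_sigma, Finset.mem_range, Finset.mem_product] at hx
    obtain ⟨hk, hg, hc⟩ := hx
    rw [mem_Pmon] at hg
    rw [mem_Cfin] at hc
    obtain ⟨⟨hr'm, hr'd⟩, ha'd, hcop⟩ := hc
    simp only [Finset.mem_product]
    constructor
    · rw [mem_Pmon]
      refine ⟨hg.1.mul hr'm, ?_⟩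
      rw [hg.1.natDegree_mul hr'm, hg.2, hr'd]
      omega
    · rw [mem_Ldeg]
      by_cases ha0 : a' = 0
      · rw [ha0, mul_zero, Polynomial.degree_zero]
        exact bot_lt_iff_ne_bot.mpr (by simp)
      · rw [Polynomial.degree_mul]
        have hgd : g.degree = (k : WithBot ℕ) := by
          rw [Polynomial.degree_eq_natDegree hg.1.ne_zero, hg.2]
        rw [hgd]
        have : (k : WithBot ℕ) + a'.degree < (k : WithBot ℕ) + ((n - k : ℕ) : WithBot ℕ) :=
          WithBot.add_lt_add_left (by simp) ha'd
        refine lt_of_lt_of_le this ?_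
        rw [← Nat.cast_add]
        exact_mod_cast Nat.le_of_eq (by omega)
  · -- injective
    rintro ⟨k1, g1, r1, a1⟩ h1 ⟨k2, g2, r2, a2⟩ h2 heq
    simp only [Finset.mem_sigma, Finset.mem_range, Finset.mem_product] at h1 h2
    obtain ⟨hk1, hg1, hc1⟩ := h1
    obtain ⟨hk2, hg2, hc2⟩ := h2
    rw [mem_Pmon] at hg1 hg2
    rw [mem_Cfin] at hc1 hc2
    obtain ⟨⟨hm1, _⟩, _, u1, v1, hb1⟩ := hc1
    obtain ⟨⟨hm2, _⟩, _, u2, v2, hb2⟩ := hc2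
    simp only [Prod.mk.injEq] at heq
    obtain ⟨he1, he2⟩ := heq
    have d12 : g1 ∣ g2 := ⟨u2 * a1 + v2 * r1, by linear_combination -u2*he2 - v2*he1 - g2*hb2⟩
    have d21 : g2 ∣ g1 := ⟨u1 * a2 + v1 * r2, by linear_combination u1*he2 + v1*he1 - g1*hb1⟩
    have hgeq : g1 = g2 :=
      Polynomial.eq_of_monic_of_associated hg1.1 hg2.1 (associated_of_dvd_dvd d12 d21)
    subst hgeq
    have hreq : r1 = r2 := mul_left_cancel₀ hg1.1.ne_zero he1
    have haeq : a1 = a2 := mul_left_cancel₀ hg1.1.ne_zero he2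
    have hkeq : k1 = k2 := by rw [← hg1.2, ← hg2.2]
    subst hreq; subst haeq; subst hkeq
    rfl
  · -- surjective
    rintro ⟨r, a⟩ hp
    simp only [Finset.mem_product] at hp
    obtain ⟨hrm, hal⟩ := hp
    rw [mem_Pmon] at hrm
    rw [mem_Ldeg] at hal
    have hr0 : r ≠ 0 := hrm.1.ne_zero
    set d := EuclideanDomain.gcd r a with hd
    have hd0 : d ≠ 0 := by
      intro h
      exact hr0 (EuclideanDomain.gcd_eq_zero_iff.mp h).1
    set g := d * Polynomial.C d.leadingCoeff⁻¹ with hgdef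
    have hgm : g.Monic := Polynomial.monic_mul_leadingCoeff_inv hd0
    have hgd : g ∣ d := by
      refine ⟨Polynomial.C d.leadingCoeff, ?_⟩
      rw [hgdef, mul_assoc, ← Polynomial.C_mul,
        inv_mul_cancel₀ (Polynomial.leadingCoeff_ne_zero.mpr hd0), Polynomial.C_1, mul_one]
    obtain ⟨r', hr'⟩ := hgd.trans (EuclideanDomain.gcd_dvd_left r a)
    obtain ⟨a', ha'⟩ := hgd.trans (EuclideanDomain.gcd_dvd_right r a)
    have hg0 : g ≠ 0 := hgm.ne_zero
    have hbez : (1 : Polynomial Fq)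
        = r' * (EuclideanDomain.gcdA r a * Polynomial.C d.leadingCoeff⁻¹)
          + a' * (EuclideanDomain.gcdB r a * Polynomial.C d.leadingCoeff⁻¹) := by
      apply mul_left_cancel₀ hg0
      have hb := EuclideanDomain.gcd_eq_gcd_ab r a
      calc g * 1 = (r * EuclideanDomain.gcdA r a + a * EuclideanDomain.gcdB r a)
            * Polynomial.C d.leadingCoeff⁻¹ := by rw [mul_one, hgdef, ← hb]
        _ = g * (r' * (EuclideanDomain.gcdA r a * Polynomial.C d.leadingCoeff⁻¹)
              + a' * (EuclideanDomain.gcdB r a * Polynomial.C d.leadingCoeff⁻¹)) := by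
            rw [hr', ha']; ring
    have hcop : IsCoprime a' r' :=
      ⟨EuclideanDomain.gcdB r a * Polynomial.C d.leadingCoeff⁻¹,
       EuclideanDomain.gcdA r a * Polynomial.C d.leadingCoeff⁻¹, by linear_combination -hbez⟩
    have hr'm : r'.Monic := hgm.of_mul_monic_left (hr' ▸ hrm.1)
    have hdegsum : g.natDegree + r'.natDegree = n := by
      rw [← hgm.natDegree_mul hr'm, ← hr', hrm.2]
    set k := g.natDegree with hk
    have hkn : k ≤ n := by omega
    have ha'mem : a' ∈ Ldeg Fq (n - k) := by
      rw [mem_Ldeg]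
      by_cases ha'0 : a' = 0
      · rw [ha'0, Polynomial.degree_zero]
        exact bot_lt_iff_ne_bot.mpr (by simp)
      · have ha0 : a ≠ 0 := by rw [ha']; exact mul_ne_zero hg0 ha'0
        have h1 : a.natDegree < n := (Polynomial.natDegree_lt_iff_degree_lt ha0).mpr hal
        have h2 : a.natDegree = k + a'.natDegree := by
          rw [ha', Polynomial.natDegree_mul hg0 ha'0]
        rw [← Polynomial.natDegree_lt_iff_degree_lt ha'0]
        omega
    refine ⟨⟨k, (g, (r', a'))⟩, ?_, by simp [← hr', ← ha']⟩
    simp only [Finset.mem_sigma, Finset.mem_range, Finset.mem_product]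
    refine ⟨by omega, ?_, ?_⟩
    · rw [mem_Pmon]; exact ⟨hgm, rfl⟩
    · rw [mem_Cfin]
      refine ⟨⟨hr'm, ?_⟩, (mem_Ldeg Fq).mp ha'mem, hcop⟩
      show r'.natDegree = n - k
      omega

lemma Cfin_card_zero : (Cfin Fq 0).card = 1 := by
  have h := conv Fq 0
  simpa using h.symm

lemma Cfin_card_add (n : ℕ) (hn : 1 ≤ n) :
    (Cfin Fq n).card + Fintype.card Fq ^ (2*n-1) = Fintype.card Fq ^ (2*n) := by
  have h1 := conv Fq n
  have h2 := conv Fq (n-1)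
  rw [Finset.sum_range_succ'] at h1
  have e : ∑ i ∈ Finset.range n, Fintype.card Fq ^ (i+1) * (Cfin Fq (n-(i+1))).card
      = Fintype.card Fq *
        ∑ k ∈ Finset.range ((n-1)+1), Fintype.card Fq ^ k * (Cfin Fq ((n-1)-k)).card := by
    rw [Finset.mul_sum]
    have hn' : (n-1)+1 = n := by omega
    rw [hn']
    refine Finset.sum_congr rfl fun i hi => ?_
    have hni : n - (i+1) = (n-1) - i := by omega
    rw [hni, pow_succ]
    ring
  rw [e, ← h2] at h1
  have hp : Fintype.card Fq * Fintype.card Fq ^ (2*(n-1)) = Fintype.card Fq ^ (2*n-1) := by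
    rw [← pow_succ']
    congr 1
    omega
  rw [hp] at h1
  simp only [pow_zero, one_mul, Nat.sub_zero] at h1
  omega

lemma sum_polyPhi_eq (n : ℕ) :
    ∑ r ∈ Pmon Fq n, polyPhi r = (Cfin Fq n).card := by
  classical
  have h : ((Pmon Fq n ×ˢ Ldeg Fq n).filter (fun p => IsCoprime p.2 p.1)).card
      = ∑ r ∈ Pmon Fq n, ((Ldeg Fq n).filter (fun a => IsCoprime a r)).card := by
    rw [Finset.card_filter, Finset.sum_product]
    refine Finset.sum_congr rfl fun r _ => ?_
    rw [Finset.card_filter]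
  rw [Cfin, h]
  refine Finset.sum_congr rfl fun r hr => ?_
  rw [mem_Pmon] at hr
  rw [polyPhi_eq_card Fq hr.1, hr.2]

lemma main_sum (c : ℝ) (M : ℕ) :
    ∑ n ∈ Finset.range (M+1),
        (-1:ℝ)^n * ((Cfin Fq n).card : ℝ) / (Fintype.card Fq : ℝ) ^ (c * n)
    = (1 + (Fintype.card Fq : ℝ) ^ ((1:ℝ) - c)) / (1 + (Fintype.card Fq : ℝ) ^ ((2:ℝ) - c))
      + (-1:ℝ)^M * (((Fintype.card Fq : ℝ) - 1) * (Fintype.card Fq : ℝ) ^ ((1:ℝ) - c)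
          / (1 + (Fintype.card Fq : ℝ) ^ ((2:ℝ) - c)))
        * (Fintype.card Fq : ℝ) ^ (((2:ℝ) - c) * M) := by
  have hQ0 : (0:ℝ) < (Fintype.card Fq : ℝ) := by
    exact_mod_cast Fintype.card_pos
  set Q : ℝ := (Fintype.card Fq : ℝ) with hQdef
  set A : ℝ := Q ^ ((1:ℝ) - c) with hA
  set B : ℝ := Q ^ ((2:ℝ) - c) with hB
  have hBpos : 0 < B := Real.rpow_pos_of_pos hQ0 _
  have h1B : 1 + B ≠ 0 := by positivity
  have hQA : Q * A = B := by
    rw [hA, hB, show (2:ℝ)-c = 1 + (1-c) by ring, Real.rpow_add hQ0, Real.rpow_one]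
  induction M with
  | zero =>
      rw [Finset.sum_range_one]
      have hc0 : c * ((0:ℕ):ℝ) = 0 := by norm_num
      rw [Cfin_card_zero, hc0, Real.rpow_zero]
      have hy0 : Q ^ (((2:ℝ) - c) * ((0:ℕ):ℝ)) = 1 := by
        norm_num
      rw [hy0]
      field_simp
      linear_combination -hQA
  | succ M ih =>
      rw [Finset.sum_range_succ, ih]
      have hval : ((Cfin Fq (M+1)).card : ℝ)
          = Q ^ ((2*M+2 : ℕ)) - Q ^ ((2*M+1 : ℕ)) := by
        have := Cfin_card_add Fq (M+1) (by omega)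
        have h2 : 2*(M+1) - 1 = 2*M+1 := by omega
        have h3 : 2*(M+1) = 2*M+2 := by omega
        rw [h2, h3] at this
        have := congrArg (fun x : ℕ => (x : ℝ)) this
        push_cast at this
        push_cast
        linarith
      have hnp1 : ∀ m : ℕ, (Q : ℝ) ^ (m : ℕ) = Q ^ ((m:ℕ) : ℝ) := by
        intro m; rw [Real.rpow_natCast]
      have hyM : Q ^ (((2:ℝ) - c) * ((M:ℕ):ℝ)) = Q ^ (((2:ℝ)-c) * M) := rfl
      set yM : ℝ := Q ^ (((2:ℝ) - c) * (M:ℝ)) with hyMdef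
      have hyMpos : 0 < yM := Real.rpow_pos_of_pos hQ0 _
      have hediv : ∀ x y : ℝ, Q ^ x / Q ^ y = Q ^ (x - y) := fun x y =>
        (Real.rpow_sub hQ0 x y).symm
      have hterm : ((Cfin Fq (M+1)).card : ℝ) / Q ^ (c * ((M+1:ℕ):ℝ))
          = Q * (A * yM) - A * yM := by
        rw [hval, sub_div, hnp1, hnp1, hediv, hediv]
        have e1 : ((2*M+2 : ℕ) : ℝ) - c * ((M+1:ℕ):ℝ) = 1 + (((1:ℝ) - c) + ((2:ℝ)-c) * M) := by
          push_cast; ring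
        have e2 : ((2*M+1 : ℕ) : ℝ) - c * ((M+1:ℕ):ℝ) = ((1:ℝ) - c) + ((2:ℝ)-c) * M := by
          push_cast; ring
        rw [e1, e2, Real.rpow_add hQ0, Real.rpow_add hQ0, Real.rpow_one, ← hA, ← hyMdef]
      have hyM1 : Q ^ (((2:ℝ) - c) * ((M+1:ℕ):ℝ)) = yM * B := by
        rw [hyMdef, hB, ← Real.rpow_add hQ0]
        congr 1
        push_cast; ring
      rw [hyM1]
      have hsplit : (-1:ℝ)^(M+1) * ((Cfin Fq (M+1)).card : ℝ) / Q ^ (c * ((M+1:ℕ):ℝ))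
          = (-1:ℝ)^(M+1) * (Q * (A * yM) - A * yM) := by
        rw [mul_div_assoc, hterm]
      rw [hsplit, pow_succ]
      field_simp
      ring

end AuxPhiCount


/-- For `M ≥ 0` and real `c ≠ 2`, the sum over monic `r` with `deg r ≤ M` of
`(-1)^{deg r}·φ(r)/q^{c·deg r}` equals
`(1+q^{1-c})/(1+q^{2-c}) + (-1)^M·(q-1)q^{1-c}/(1+q^{2-c})·q^{M(2-c)}`. -/
theorem phi_alt_sum_rpow (Fq : Type) [Field Fq] [Fintype Fq] (M : ℕ) (c : ℝ) (hc : c ≠ 2) :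
    ∑ᶠ r ∈ {r : Polynomial Fq | r.Monic ∧ r.natDegree ≤ M},
        (-1 : ℝ) ^ r.natDegree * (polyPhi r : ℝ) / (Fintype.card Fq : ℝ) ^ (c * r.natDegree) =
      (1 + (Fintype.card Fq : ℝ) ^ ((1 : ℝ) - c)) /
          (1 + (Fintype.card Fq : ℝ) ^ ((2 : ℝ) - c)) +
        (-1 : ℝ) ^ M *
          (((Fintype.card Fq : ℝ) - 1) * (Fintype.card Fq : ℝ) ^ ((1 : ℝ) - c) /
            (1 + (Fintype.card Fq : ℝ) ^ ((2 : ℝ) - c))) *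
          (Fintype.card Fq : ℝ) ^ ((M : ℝ) * (2 - c)) := by
  classical
  have hset : {r : Polynomial Fq | r.Monic ∧ r.natDegree ≤ M}
      = ↑((Finset.range (M+1)).biUnion (fun n => Pmon Fq n)) := by
    ext r
    simp only [Set.mem_setOf_eq, Finset.coe_biUnion, Set.mem_iUnion, Finset.mem_coe,
      Finset.mem_range, mem_Pmon]
    constructor
    · rintro ⟨h1, h2⟩
      exact ⟨r.natDegree, by omega, h1, rfl⟩
    · rintro ⟨n, hn, h1, h2⟩
      exact ⟨h1, by omega⟩
  rw [hset, finsum_mem_coe_finset]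
  rw [Finset.sum_biUnion]
  · have hsum : ∀ n ∈ Finset.range (M+1),
        ∑ r ∈ Pmon Fq n,
          (-1 : ℝ) ^ r.natDegree * (polyPhi r : ℝ) / (Fintype.card Fq : ℝ) ^ (c * r.natDegree)
        = (-1:ℝ)^n * ((Cfin Fq n).card : ℝ) / (Fintype.card Fq : ℝ) ^ (c * n) := by
      intro n _
      rw [← sum_polyPhi_eq]
      push_cast
      rw [Finset.mul_sum, Finset.sum_div]
      refine Finset.sum_congr rfl fun r hr => ?_
      rw [mem_Pmon] at hr
      rw [hr.2]
    rw [Finset.sum_congr rfl hsum, main_sum Fq c M]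
    rw [mul_comm ((2:ℝ) - c) (M:ℝ)]
  · intro n1 _ n2 _ hne
    simp only [Function.onFun]
    rw [Finset.disjoint_left]
    intro r h1 h2
    rw [mem_Pmon] at h1 h2
    exact hne (by rw [← h1.2, ← h2.2])

end
end

section
/- Let q be a prime power, f a quadratic form over 𝔽_q in n variables, N(P) the number of x ∈ 𝔽_q[t]^n with deg(x_i) < P and f(x) = 0, and Ñ(P) = (1/(q−1))·#{x primitive, deg(x_i) < P, f(x) = 0} where primitive means gcd(x_1,…,x_n) = 1. Then Ñ(P) = (N(P) − q·N(P−1))/(q−1) + 1 for all P ≥ 1. -/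
open Polynomial Finset

/-- `N(P)`: the number of zeros `x ∈ 𝔽_q[t]^n` with all `deg x_i < P` of the quadratic
form `f(x) = Σ_{i,j} A_{ij} x_i x_j` given by the matrix `A`. -/
noncomputable def quadCount {Fq : Type} [Field Fq] {n : ℕ}
    (A : Matrix (Fin n) (Fin n) Fq) (P : ℕ) : ℕ :=
  Nat.card {x : Fin n → Polynomial Fq //
    (∀ i, (x i).degree < (P : WithBot ℕ)) ∧
      ∑ i, ∑ j, Polynomial.C (A i j) * x i * x j = 0}

/-- The number of primitive zeros (i.e. with `gcd(x_1,…,x_n) = 1`) `x ∈ 𝔽_q[t]^n`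
with all `deg x_i < P` of the quadratic form given by `A`. -/
noncomputable def quadCountPrim {Fq : Type} [Field Fq] {n : ℕ}
    (A : Matrix (Fin n) (Fin n) Fq) (P : ℕ) : ℕ :=
  Nat.card {x : Fin n → Polynomial Fq //
    (∀ i, (x i).degree < (P : WithBot ℕ)) ∧
      ∑ i, ∑ j, Polynomial.C (A i j) * x i * x j = 0 ∧
      ∀ d : Polynomial Fq, (∀ i, d ∣ x i) → IsUnit d}


namespace PrimCountAux

variable {Fq : Type} [Field Fq] [DecidableEq Fq] {n : ℕ}

noncomputable def qf (A : Matrix (Fin n) (Fin n) Fq) (x : Fin n → Polynomial Fq) : Polynomial Fq :=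
  ∑ i, ∑ j, Polynomial.C (A i j) * x i * x j

lemma qf_mul (A : Matrix (Fin n) (Fin n) Fq) (d : Polynomial Fq) (z : Fin n → Polynomial Fq) :
    qf A (fun i => d * z i) = d ^ 2 * qf A z := by
  simp only [qf, Finset.mul_sum]
  exact Finset.sum_congr rfl fun i _ => Finset.sum_congr rfl fun j _ => by ring

def Prim (x : Fin n → Polynomial Fq) : Prop :=
  ∀ d : Polynomial Fq, (∀ i, d ∣ x i) → IsUnit d

lemma Prim.ne_zero {x : Fin n → Polynomial Fq} (h : Prim x) : x ≠ 0 := by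
  intro h0
  exact Polynomial.not_isUnit_X (h X (fun i => by simp [h0]))

lemma prim_of_gcd_eq_one {x : Fin n → Polynomial Fq}
    (h : Finset.gcd Finset.univ x = 1) : Prim x := fun d hd =>
  isUnit_of_dvd_one (h ▸ Finset.dvd_gcd fun i _ => hd i)

lemma Prim.gcd_eq_one {x : Fin n → Polynomial Fq} (h : Prim x) :
    Finset.gcd Finset.univ x = 1 := by
  rw [← Finset.normalize_gcd, normalize_eq_one]
  exact h _ fun i => Finset.gcd_dvd (Finset.mem_univ i)

lemma gcd_mul_prim {g : Polynomial Fq} (hg : g.Monic) {z : Fin n → Polynomial Fq}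
    (hz : Prim z) : Finset.gcd Finset.univ (fun i => g * z i) = g := by
  rw [Finset.gcd_mul_left, hz.gcd_eq_one, hg.normalize_eq_self, mul_one]

lemma exists_decomp {x : Fin n → Polynomial Fq} (hx : x ≠ 0) :
    ∃ z : Fin n → Polynomial Fq,
      (∀ i, x i = Finset.gcd Finset.univ x * z i) ∧ Prim z := by
  obtain ⟨i, _⟩ := Function.ne_iff.mp hx
  obtain ⟨z, hz1, hz2⟩ := Finset.extract_gcd x ⟨i, Finset.mem_univ i⟩
  exact ⟨z, fun j => hz1 j (Finset.mem_univ j), prim_of_gcd_eq_one hz2⟩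

lemma gcd_monic {x : Fin n → Polynomial Fq} (hx : x ≠ 0) :
    (Finset.gcd Finset.univ x).Monic := by
  obtain ⟨i, hi⟩ := Function.ne_iff.mp hx
  have h0 : Finset.gcd Finset.univ x ≠ 0 := fun h =>
    hi (by simpa using Finset.gcd_eq_zero_iff.mp h i (Finset.mem_univ i))
  rw [← Finset.normalize_gcd]
  exact monic_normalize h0

lemma monic_shift {g : Polynomial Fq} (hg : g.Monic) (a : Fq) :
    (X * g + C a).Monic := by
  have hXg : (X * g).Monic := monic_X.mul hg
  refine hXg.add_of_left ?_
  refine degree_C_le.trans_lt ?_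
  rw [degree_mul, degree_X, degree_eq_natDegree hg.ne_zero]
  exact_mod_cast (by omega : 0 < 1 + g.natDegree)

lemma deg_step {g z : Polynomial Fq} (a : Fq) {P : ℕ} (hg : g ≠ 0) :
    ((X * g + C a) * z).degree < ((P + 1 : ℕ) : WithBot ℕ) ↔
      (g * z).degree < (P : WithBot ℕ) := by
  have hG : (X * g + C a).degree = ((g.natDegree + 1 : ℕ) : WithBot ℕ) := by
    rw [degree_add_eq_left_of_degree_lt, degree_mul, degree_X, degree_eq_natDegree hg]
    · push_cast; ring
    · refine degree_C_le.trans_lt ?_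
      rw [degree_mul, degree_X, degree_eq_natDegree hg]
      exact_mod_cast (by omega : 0 < 1 + g.natDegree)
  rcases eq_or_ne z 0 with rfl | hz
  · rw [mul_zero, mul_zero, degree_zero]
    simp [bot_lt_iff_ne_bot]
  · rw [degree_mul, degree_mul, hG, degree_eq_natDegree hg, degree_eq_natDegree hz]
    constructor <;> intro h
    · have h' : g.natDegree + 1 + z.natDegree < P + 1 := by exact_mod_cast h
      exact_mod_cast (by omega : g.natDegree + z.natDegree < P)
    · have h' : g.natDegree + z.natDegree < P := by exact_mod_cast h
      exact_mod_cast (by omega : g.natDegree + 1 + z.natDegree < P + 1)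


variable (A : Matrix (Fin n) (Fin n) Fq)

def SolSet (P : ℕ) : Set (Fin n → Polynomial Fq) :=
  {x | (∀ i, (x i).degree < (P : WithBot ℕ)) ∧ qf A x = 0}

def PrimSet (P : ℕ) : Set (Fin n → Polynomial Fq) :=
  {x | (∀ i, (x i).degree < (P : WithBot ℕ)) ∧ qf A x = 0 ∧ Prim x}

def NPSet (P : ℕ) : Set (Fin n → Polynomial Fq) :=
  {x | (∀ i, (x i).degree < (P : WithBot ℕ)) ∧ qf A x = 0 ∧ x ≠ 0 ∧ ¬ Prim x}

def NZSet (P : ℕ) : Set (Fin n → Polynomial Fq) :=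
  {x | (∀ i, (x i).degree < (P : WithBot ℕ)) ∧ qf A x = 0 ∧ x ≠ 0}

variable [Fintype Fq]

lemma finite_deg (P : ℕ) :
    {x : Fin n → Polynomial Fq | ∀ i, (x i).degree < (P : WithBot ℕ)}.Finite := by
  have : Finite (Polynomial.degreeLT Fq P) :=
    Finite.of_equiv _ (Polynomial.degreeLTEquiv Fq P).toEquiv.symm
  rw [← Set.finite_coe_iff]
  refine Finite.of_injective (fun x => (fun i =>
    (⟨x.1 i, Polynomial.mem_degreeLT.mpr (x.2 i)⟩ : Polynomial.degreeLT Fq P))) ?_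
  intro a b hab
  exact Subtype.ext (funext fun i => congrArg Subtype.val (congrFun hab i))

lemma finite_solSet (P : ℕ) : (SolSet A P).Finite :=
  (finite_deg P).subset fun _ h => h.1

def DT (P : ℕ) : Type :=
  {p : Polynomial Fq × (Fin n → Polynomial Fq) //
    p.1.Monic ∧ (∀ i, (p.1 * p.2 i).degree < (P : WithBot ℕ)) ∧ qf A p.2 = 0 ∧ Prim p.2}

/-- The multiplication map `DT A P → NZSet A P`. -/
noncomputable def theta (P : ℕ) (p : DT A P) : NZSet A P := by
  refine ⟨fun i => p.1.1 * p.1.2 i, p.2.2.1, ?_, ?_⟩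
  · rw [qf_mul, p.2.2.2.1, mul_zero]
  · obtain ⟨j, hj⟩ := Function.ne_iff.mp p.2.2.2.2.ne_zero
    exact Function.ne_iff.mpr ⟨j, by
      simpa using mul_ne_zero p.2.1.ne_zero (by simpa using hj)⟩

lemma theta_bijective (P : ℕ) : Function.Bijective (theta A P) := by
  constructor
  · rintro ⟨⟨g, z⟩, hg, hdeg, hqf, hprim⟩ ⟨⟨g', z'⟩, hg', hdeg', hqf', hprim'⟩ h
    have h' : (fun i => g * z i) = (fun i => g' * z' i) :=
      congrArg Subtype.val h
    have hgg : g = g' := by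
      calc g = Finset.gcd Finset.univ (fun i => g * z i) := (gcd_mul_prim hg hprim).symm
        _ = Finset.gcd Finset.univ (fun i => g' * z' i) := by rw [h']
        _ = g' := gcd_mul_prim hg' hprim'
    subst hgg
    have hzz : z = z' := funext fun i =>
      mul_left_cancel₀ hg.ne_zero (congrFun h' i)
    subst hzz
    rfl
  · rintro ⟨x, hdeg, hqf, hne⟩
    obtain ⟨z, hz1, hz2⟩ := exists_decomp hne
    set g := Finset.gcd Finset.univ x with hgdef
    have hx : x = fun i => g * z i := funext hz1
    have hgm : g.Monic := gcd_monic hne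
    have hqz : qf A z = 0 := by
      rw [hx, qf_mul] at hqf
      exact (mul_eq_zero.mp hqf).resolve_left (pow_ne_zero _ hgm.ne_zero)
    refine ⟨⟨⟨g, z⟩, hgm, fun i => ?_, hqz, hz2⟩, Subtype.ext hx.symm⟩
    · rw [← hz1 i]; exact hdeg i

/-- The map `Fq × DT A P → NPSet A (P+1)`. -/
noncomputable def psi (P : ℕ) (p : Fq × DT A P) : NPSet A (P + 1) := by
  refine ⟨fun i => (X * p.2.1.1 + C p.1) * p.2.1.2 i, ?_, ?_, ?_, ?_⟩
  · intro i
    have := (deg_step (z := p.2.1.2 i) p.1 p.2.2.1.ne_zero).mpr (p.2.2.2.1 i)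
    exact_mod_cast this
  · rw [qf_mul, p.2.2.2.2.1, mul_zero]
  · obtain ⟨j, hj⟩ := Function.ne_iff.mp p.2.2.2.2.2.ne_zero
    exact Function.ne_iff.mpr ⟨j, by
      simpa using mul_ne_zero (monic_shift p.2.2.1 p.1).ne_zero (by simpa using hj)⟩
  · intro hprim
    have hu := hprim (X * p.2.1.1 + C p.1) (fun i => ⟨p.2.1.2 i, rfl⟩)
    have := degree_eq_zero_of_isUnit hu
    rw [degree_add_eq_left_of_degree_lt, degree_mul, degree_X,
      degree_eq_natDegree p.2.2.1.ne_zero] at this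
    · exact absurd this (by exact_mod_cast (by omega : ¬((1 + p.2.1.1.natDegree : ℕ) = 0)))
    · refine degree_C_le.trans_lt ?_
      rw [degree_mul, degree_X, degree_eq_natDegree p.2.2.1.ne_zero]
      exact_mod_cast (by omega : 0 < 1 + p.2.1.1.natDegree)

lemma psi_bijective (P : ℕ) : Function.Bijective (psi A P) := by
  constructor
  · rintro ⟨a, ⟨⟨g, z⟩, hg, hdeg, hqf, hprim⟩⟩ ⟨a', ⟨⟨g', z'⟩, hg', hdeg', hqf', hprim'⟩⟩ h
    have h' : (fun i => (X * g + C a) * z i) = (fun i => (X * g' + C a') * z' i) :=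
      congrArg Subtype.val h
    have hGG : X * g + C a = X * g' + C a' := by
      calc X * g + C a = Finset.gcd Finset.univ (fun i => (X * g + C a) * z i) :=
            (gcd_mul_prim (monic_shift hg a) hprim).symm
        _ = Finset.gcd Finset.univ (fun i => (X * g' + C a') * z' i) := by rw [h']
        _ = X * g' + C a' := gcd_mul_prim (monic_shift hg' a') hprim'
    have haa : a = a' := by
      have := congrArg (fun p => Polynomial.coeff p 0) hGG
      simpa [Polynomial.mul_coeff_zero] using this
    subst haa
    have hgg : g = g' := by
      have h2 : X * g = X * g' := by
        have := add_right_cancel hGG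
        exact this
      exact mul_left_cancel₀ Polynomial.X_ne_zero h2
    subst hgg
    have hzz : z = z' := funext fun i =>
      mul_left_cancel₀ (monic_shift hg a).ne_zero (congrFun h' i)
    subst hzz
    rfl
  · rintro ⟨x, hdeg, hqf, hne, hnprim⟩
    obtain ⟨z, hz1, hz2⟩ := exists_decomp hne
    set G := Finset.gcd Finset.univ x with hGdef
    have hx : x = fun i => G * z i := funext hz1
    have hGm : G.Monic := gcd_monic hne
    have hGnu : ¬ IsUnit G := by
      intro hu
      exact hnprim fun d hd => isUnit_of_dvd_unit (Finset.dvd_gcd fun i _ => hd i) hu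
    have hG1 : G.natDegree ≠ 0 := by
      intro h0
      refine hGnu ?_
      have : G = C (G.coeff 0) := Polynomial.eq_C_of_natDegree_eq_zero h0
      rw [this]
      refine Polynomial.isUnit_C.mpr (IsUnit.mk0 _ ?_)
      intro hc
      exact hGm.ne_zero (by rw [this, hc, map_zero])
    have hXd : X * G.divX + C (G.coeff 0) = G := Polynomial.X_mul_divX_add G
    have hdm : G.divX.Monic := by
      have hCd : (C (G.coeff 0)).degree < G.degree := by
        refine degree_C_le.trans_lt ?_
        rw [degree_eq_natDegree hGm.ne_zero]
        exact_mod_cast Nat.pos_of_ne_zero hG1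
      have hXG : (X * G.divX).Monic := by
        rw [eq_sub_of_add_eq hXd]
        exact hGm.sub_of_left hCd
      exact monic_X.of_mul_monic_left hXG
    have hqz : qf A z = 0 := by
      rw [hx, qf_mul] at hqf
      exact (mul_eq_zero.mp hqf).resolve_left (pow_ne_zero _ hGm.ne_zero)
    refine ⟨⟨G.coeff 0, ⟨⟨G.divX, z⟩, hdm, fun i => ?_, hqz, hz2⟩⟩, ?_⟩
    · have h1 : ((X * G.divX + C (G.coeff 0)) * z i).degree < ((P + 1 : ℕ) : WithBot ℕ) := by
        rw [hXd, ← hz1 i]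
        exact_mod_cast hdeg i
      exact (deg_step (G.coeff 0) hdm.ne_zero).mp h1
    · refine Subtype.ext ?_
      show (fun i => (X * G.divX + C (G.coeff 0)) * z i) = x
      rw [hXd]
      exact hx.symm

lemma zero_mem_solSet (P : ℕ) : (0 : Fin n → Polynomial Fq) ∈ SolSet A P := by
  constructor
  · intro i
    simp [bot_lt_iff_ne_bot]
  · simp [qf]

lemma solSet_eq (P : ℕ) :
    SolSet A (P + 1) = PrimSet A (P + 1) ∪ (NPSet A (P + 1) ∪ {0}) := by
  ext x
  simp only [Set.mem_union, Set.mem_singleton_iff]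
  constructor
  · rintro ⟨hd, hq⟩
    by_cases hx0 : x = 0
    · exact Or.inr (Or.inr hx0)
    by_cases hp : Prim x
    · exact Or.inl ⟨hd, hq, hp⟩
    · exact Or.inr (Or.inl ⟨hd, hq, hx0, hp⟩)
  · rintro (⟨hd, hq, _⟩ | ⟨hd, hq, _, _⟩ | rfl)
    · exact ⟨hd, hq⟩
    · exact ⟨hd, hq⟩
    · exact zero_mem_solSet A _

lemma card_split (P : ℕ) :
    (SolSet A (P + 1)).ncard = (PrimSet A (P + 1)).ncard + ((NPSet A (P + 1)).ncard + 1) := by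
  have hfin := finite_solSet A (P + 1)
  have hP : (PrimSet A (P + 1)).Finite := hfin.subset (by rintro x ⟨hd, hq, _⟩; exact ⟨hd, hq⟩)
  have hN : (NPSet A (P + 1)).Finite := hfin.subset (by rintro x ⟨hd, hq, _, _⟩; exact ⟨hd, hq⟩)
  have h0 : ({0} : Set (Fin n → Polynomial Fq)).Finite := Set.finite_singleton 0
  have d2 : Disjoint (NPSet A (P + 1)) ({0} : Set (Fin n → Polynomial Fq)) := by
    rw [Set.disjoint_left]
    rintro x ⟨_, _, hne, _⟩ hx0
    exact hne (by simpa using hx0)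
  have d1 : Disjoint (PrimSet A (P + 1)) (NPSet A (P + 1) ∪ {0}) := by
    rw [Set.disjoint_left]
    rintro x ⟨_, _, hp⟩ (⟨_, _, _, hnp⟩ | hx0)
    · exact hnp hp
    · exact hp.ne_zero (by simpa using hx0)
  rw [solSet_eq, Set.ncard_union_eq d1 hP (hN.union h0), Set.ncard_union_eq d2 hN h0,
    Set.ncard_singleton]

lemma card_nz (P : ℕ) : (SolSet A P).ncard = (NZSet A P).ncard + 1 := by
  have hfin := finite_solSet A P
  have hN : (NZSet A P).Finite := hfin.subset (by rintro x ⟨hd, hq, _⟩; exact ⟨hd, hq⟩)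
  have hsets : SolSet A P = NZSet A P ∪ {0} := by
    ext x
    simp only [Set.mem_union, Set.mem_singleton_iff]
    constructor
    · rintro ⟨hd, hq⟩
      by_cases hx0 : x = 0
      · exact Or.inr hx0
      · exact Or.inl ⟨hd, hq, hx0⟩
    · rintro (⟨hd, hq, _⟩ | rfl)
      · exact ⟨hd, hq⟩
      · exact zero_mem_solSet A P
  have dd : Disjoint (NZSet A P) ({0} : Set (Fin n → Polynomial Fq)) := by
    rw [Set.disjoint_left]
    rintro x ⟨_, _, hne⟩ hx0
    exact hne (by simpa using hx0)
  rw [hsets, Set.ncard_union_eq dd hN (Set.finite_singleton 0), Set.ncard_singleton]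

lemma key (P : ℕ) :
    quadCount A (P + 1) + Fintype.card Fq =
      quadCountPrim A (P + 1) + Fintype.card Fq * quadCount A P + 1 := by
  have e0 : quadCount A (P + 1) = (SolSet A (P + 1)).ncard := by
    rw [← Nat.card_coe_set_eq]; rfl
  have e0' : quadCount A P = (SolSet A P).ncard := by
    rw [← Nat.card_coe_set_eq]; rfl
  have e1 : quadCountPrim A (P + 1) = (PrimSet A (P + 1)).ncard := by
    rw [← Nat.card_coe_set_eq]; rfl
  have e2 : (NPSet A (P + 1)).ncard = Fintype.card Fq * Nat.card (DT A P) := by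
    rw [← Nat.card_coe_set_eq, ← Nat.card_eq_of_bijective _ (psi_bijective A P),
      Nat.card_prod, Nat.card_eq_fintype_card]
  have e3 : Nat.card (DT A P) = (NZSet A P).ncard := by
    rw [← Nat.card_coe_set_eq]
    exact Nat.card_eq_of_bijective _ (theta_bijective A P)
  rw [e0, e0', e1, card_split A P, e2, e3, card_nz A P]
  ring

end PrimCountAux


/-- With `Ñ(P) = (1/(q-1))·#{primitive zeros of degree < P}` and `N(P)` the full count,
one has `Ñ(P) = (N(P) - q·N(P-1))/(q-1) + 1` for all `P ≥ 1`. -/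
theorem prim_count_formula (Fq : Type) [Field Fq] [Fintype Fq]
    (n : ℕ) (A : Matrix (Fin n) (Fin n) Fq) (P : ℕ) (hP : 1 ≤ P) :
    (quadCountPrim A P : ℚ) / ((Fintype.card Fq : ℚ) - 1) =
      ((quadCount A P : ℚ) - (Fintype.card Fq : ℚ) * (quadCount A (P - 1) : ℚ)) /
          ((Fintype.card Fq : ℚ) - 1) + 1 := by
  letI := Classical.decEq Fq
  obtain ⟨Q, rfl⟩ : ∃ Q, P = Q + 1 := ⟨P - 1, (Nat.succ_pred_eq_of_pos hP).symm⟩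
  have hkey := PrimCountAux.key A Q
  have hq : (2 : ℕ) ≤ Fintype.card Fq := Fintype.one_lt_card
  have h1 : ((Fintype.card Fq : ℚ) - 1) ≠ 0 := by
    have h2 : (2 : ℚ) ≤ (Fintype.card Fq : ℚ) := by exact_mod_cast hq
    linarith
  have hcast : (quadCount A (Q + 1) : ℚ) + (Fintype.card Fq : ℚ) =
      (quadCountPrim A (Q + 1) : ℚ) + (Fintype.card Fq : ℚ) * (quadCount A Q : ℚ) + 1 := by
    exact_mod_cast hkey
  have hQ : Q + 1 - 1 = Q := rfl
  rw [hQ]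
  field_simp
  linarith [hcast]
end
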